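/- Let N be a finite nilpotent group and w a word with parameters from N in n variables. The induced map w : Nⁿ → N is surjective if and only if all its fibers have size |N|^(n-1). -/

import Mathlib

universe u

/-- The map `Nⁿ → N` induced by a word with parameters from `N`
(an element of the free product `N ∗ F⟨x₁,…,xₙ⟩`). -/
def paramWordMap {N : Type*} [Group N] {n : ℕ}
    (w : Monoid.Coprod N (FreeGroup (Fin n))) (v : Fin n → N) : N :=
  Monoid.Coprod.lift (MonoidHom.id N) (FreeGroup.lift v) w

/-- The exponent sum of the variable `xᵢ` in a word with parameters. -/
def paramExpSum {N : Type*} [Group N] {n : ℕ}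
    (w : Monoid.Coprod N (FreeGroup (Fin n))) (i : Fin n) : ℤ :=
  Multiplicative.toAdd <|
    Monoid.Coprod.lift 1
      (FreeGroup.lift fun j => if j = i then Multiplicative.ofAdd (1 : ℤ) else 1) w

open Subgroup

instance centerCommGroupInst {G : Type*} [Group G] : CommGroup (Subgroup.center G) :=
  { (inferInstance : Group (Subgroup.center G)) with
    mul_comm := fun a b => Subtype.ext (Subgroup.mem_center_iff.mp b.2 a) }

section Lemmas
variable {N M : Type*} [Group N] [Group M] {n : ℕ}

lemma paramWordMap_mul (w₁ w₂ : Monoid.Coprod N (FreeGroup (Fin n))) (v : Fin n → N) :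
    paramWordMap (w₁ * w₂) v = paramWordMap w₁ v * paramWordMap w₂ v :=
  map_mul _ _ _

lemma paramExpSum_mul (w₁ w₂ : Monoid.Coprod N (FreeGroup (Fin n))) (i : Fin n) :
    paramExpSum (w₁ * w₂) i = paramExpSum w₁ i + paramExpSum w₂ i := by
  unfold paramExpSum
  rw [map_mul]
  rfl

lemma paramWordMap_map (f : N →* M) (w : Monoid.Coprod N (FreeGroup (Fin n))) (v : Fin n → N) :
    paramWordMap (Monoid.Coprod.map f (MonoidHom.id _) w) (fun i => f (v i)) =
      f (paramWordMap w v) := by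
  unfold paramWordMap
  rw [← MonoidHom.comp_apply, ← MonoidHom.comp_apply]
  congr 1
  apply Monoid.Coprod.hom_ext
  · ext x
    simp
  · apply FreeGroup.ext_hom
    intro j
    simp

lemma paramExpSum_map (f : N →* M) (w : Monoid.Coprod N (FreeGroup (Fin n))) (i : Fin n) :
    paramExpSum (Monoid.Coprod.map f (MonoidHom.id _) w) i = paramExpSum w i := by
  unfold paramExpSum
  congr 1
  rw [← MonoidHom.comp_apply]
  congr 1
  apply Monoid.Coprod.hom_ext
  · ext x
    simp
  · apply FreeGroup.ext_hom
    intro j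
    simp

end Lemmas

section Lemmas
variable {N : Type*} [Group N] {n : ℕ}

lemma paramExpSum_inl (c : N) (i : Fin n) :
    paramExpSum (Monoid.Coprod.inl c : Monoid.Coprod N (FreeGroup (Fin n))) i = 0 := by
  unfold paramExpSum
  rw [Monoid.Coprod.lift_apply_inl]
  rfl

lemma paramExpSum_inr_of (j i : Fin n) :
    paramExpSum (Monoid.Coprod.inr (FreeGroup.of j) : Monoid.Coprod N (FreeGroup (Fin n))) i
      = if j = i then 1 else 0 := by
  unfold paramExpSum
  rw [Monoid.Coprod.lift_apply_inr, FreeGroup.lift_apply_of]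
  split <;> rfl

/-- The homomorphism `w ↦ w(v) * ∏ zᵢ^{eᵢ(w)}` for central `zᵢ`. -/
def centralProdHom (v : Fin n → N) (z : Fin n → Subgroup.center N) :
    Monoid.Coprod N (FreeGroup (Fin n)) →* N where
  toFun w := paramWordMap w v * ↑(∏ i, z i ^ paramExpSum w i)
  map_one' := by
    have h1 : ∀ i : Fin n, paramExpSum (1 : Monoid.Coprod N (FreeGroup (Fin n))) i = 0 := by
      intro i; unfold paramExpSum; rw [map_one]; rfl
    simp [paramWordMap, h1]
  map_mul' := by
    intro a b
    have hA : paramWordMap (a * b) v = paramWordMap a v * paramWordMap b v := map_mul _ _ _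
    have hC : (∏ i, z i ^ paramExpSum (a * b) i) =
        (∏ i, z i ^ paramExpSum a i) * (∏ i, z i ^ paramExpSum b i) := by
      rw [← Finset.prod_mul_distrib]
      refine Finset.prod_congr rfl fun i _ => ?_
      rw [paramExpSum_mul, zpow_add]
    have hcomm : ∀ (x : N) (c : Subgroup.center N), (c : N) * x = x * c := by
      intro x c
      exact (Subgroup.mem_center_iff.mp c.2 x).symm
    rw [hA, hC]
    push_cast
    rw [mul_assoc]
    have key : paramWordMap b v * (↑(∏ i, z i ^ paramExpSum a i) * ↑(∏ i, z i ^ paramExpSum b i))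
        = (↑(∏ i, z i ^ paramExpSum a i) : N) * (paramWordMap b v * ↑(∏ i, z i ^ paramExpSum b i)) := by
      rw [← mul_assoc, ← hcomm (paramWordMap b v) _, mul_assoc]
    rw [key, ← mul_assoc, ← mul_assoc]

lemma paramWordMap_central_shift (w : Monoid.Coprod N (FreeGroup (Fin n)))
    (v : Fin n → N) (z : Fin n → Subgroup.center N) :
    paramWordMap w (fun i => v i * z i) =
      paramWordMap w v * ↑(∏ i, z i ^ paramExpSum w i) := by
  have : Monoid.Coprod.lift (MonoidHom.id N) (FreeGroup.lift (fun i => v i * z i)) =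
      centralProdHom v z := by
    apply Monoid.Coprod.hom_ext
    · ext c
      simp [centralProdHom, paramWordMap, paramExpSum_inl]
    · apply FreeGroup.ext_hom
      intro j
      simp only [MonoidHom.comp_apply, Monoid.Coprod.lift_apply_inr, FreeGroup.lift_apply_of]
      simp only [centralProdHom, MonoidHom.coe_mk, OneHom.coe_mk, paramWordMap,
        Monoid.Coprod.lift_apply_inr, FreeGroup.lift_apply_of, paramExpSum_inr_of]
      congr 1
      rw [Finset.prod_congr rfl (fun i _ => by
        rw [show (z i ^ (if j = i then (1:ℤ) else 0)) = if j = i then z i else 1 by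
          split <;> simp])]
      rw [Finset.prod_ite_eq Finset.univ j z]
      simp
  show Monoid.Coprod.lift (MonoidHom.id N) (FreeGroup.lift (fun i => v i * z i)) w = _
  rw [this]
  rfl

end Lemmas

/-- exponent-sum extraction hom -/
def expHom {n : ℕ} (N : Type*) [Group N] (i : Fin n) :
    Monoid.Coprod N (FreeGroup (Fin n)) →* Multiplicative ℤ :=
  Monoid.Coprod.lift 1
    (FreeGroup.lift fun j => if j = i then Multiplicative.ofAdd (1 : ℤ) else 1)

lemma paramExpSum_eq_expHom {N : Type*} [Group N] {n : ℕ}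
    (w : Monoid.Coprod N (FreeGroup (Fin n))) (i : Fin n) :
    paramExpSum w i = Multiplicative.toAdd (expHom N i w) := rfl

lemma paramWordMap_comm_eq {A : Type*} [CommGroup A] {n : ℕ}
    (w : Monoid.Coprod A (FreeGroup (Fin n))) (v : Fin n → A) :
    paramWordMap w v = paramWordMap w 1 * ∏ i, v i ^ paramExpSum w i := by
  have : (Monoid.Coprod.lift (MonoidHom.id A) (FreeGroup.lift v)) =
      (Monoid.Coprod.lift (MonoidHom.id A) (FreeGroup.lift (1 : Fin n → A))) *
        ∏ i, (zpowersHom A (v i)).comp (expHom A i) := by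
    apply Monoid.Coprod.hom_ext
    · ext c
      simp only [MonoidHom.comp_apply, Monoid.Coprod.lift_apply_inl, MonoidHom.id_apply,
        MonoidHom.mul_apply, MonoidHom.finset_prod_apply, expHom, zpowersHom_apply]
      simp
    · apply FreeGroup.ext_hom
      intro j
      simp only [MonoidHom.comp_apply, Monoid.Coprod.lift_apply_inr, FreeGroup.lift_apply_of,
        MonoidHom.mul_apply, MonoidHom.finset_prod_apply, expHom, zpowersHom_apply,
        Pi.one_apply]
      have hterm : ∀ i : Fin n,
          v i ^ Multiplicative.toAdd (if j = i then Multiplicative.ofAdd (1:ℤ) else 1)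
            = if j = i then v i else 1 := by
        intro i; by_cases h : j = i <;> simp [h]
      rw [Finset.prod_congr rfl fun i _ => hterm i, Finset.prod_ite_eq Finset.univ j v]
      simp
  show Monoid.Coprod.lift (MonoidHom.id A) (FreeGroup.lift v) w = _
  rw [this]
  simp only [MonoidHom.mul_apply, MonoidHom.finset_prod_apply, MonoidHom.comp_apply,
    zpowersHom_apply]
  rfl

-- fiber count of surjective hom
lemma card_fiber_mul {G H : Type*} [Group G] [Group H] [Finite G] (f : G →* H)
    (hf : Function.Surjective f) (h : H) :
    Nat.card {g : G // f g = h} * Nat.card H = Nat.card G := by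
  obtain ⟨g₀, hg₀⟩ := hf h
  have e : {g : G // f g = h} ≃ f.ker := by
    refine ⟨fun g => ⟨g₀⁻¹ * g.1, ?_⟩, fun k => ⟨g₀ * k.1, ?_⟩, fun g => ?_, fun k => ?_⟩
    · simp [MonoidHom.mem_ker, map_mul, hg₀, g.2]
    · have := k.2
      rw [MonoidHom.mem_ker] at this
      simp [map_mul, this, hg₀]
    · simp
    · simp
  have hq : Nat.card (G ⧸ f.ker) = Nat.card H :=
    Nat.card_congr (QuotientGroup.quotientKerEquivOfSurjective f hf).toEquiv
  rw [Nat.card_congr e, Subgroup.card_eq_card_quotient_mul_card_subgroup f.ker, hq, mul_comm]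

lemma zpow_fin_sum {Z : Type*} [CommGroup Z] {n : ℕ} (ζ : Z) (f : Fin n → ℤ) :
    ζ ^ (∑ i, f i) = ∏ i, ζ ^ f i := by
  classical
  induction (Finset.univ : Finset (Fin n)) using Finset.induction_on with
  | empty => simp
  | insert a s h ih => rw [Finset.sum_insert h, Finset.prod_insert h, zpow_add, ih]

-- if the power-product map is not surjective, some prime divides card and all exponents
lemma exists_prime_of_not_surj {Z : Type*} [CommGroup Z] [Finite Z] {n : ℕ} (e : Fin n → ℤ)
    (h : ¬ Function.Surjective (fun z : Fin n → Z => ∏ i, z i ^ e i)) :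
    ∃ p : ℕ, p.Prime ∧ p ∣ Nat.card Z ∧ ∀ i, (p : ℤ) ∣ e i := by
  by_contra hc
  push_neg at hc
  apply h
  -- the span of the exponents is generated by some d with d ∣ every e i ... use principal ideal
  classical
  set I : Ideal ℤ := Ideal.span (Set.range e) with hI
  obtain ⟨d, hd⟩ : ∃ d : ℤ, I = Ideal.span {d} :=
    ⟨(Submodule.IsPrincipal.generator I), (Submodule.IsPrincipal.span_singleton_generator I).symm⟩
  have hdmem : d ∈ I := by rw [hd]; exact Ideal.mem_span_singleton_self d
  obtain ⟨c, hcrep⟩ := (Submodule.mem_span_range_iff_exists_fun ℤ).mp hdmem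
  have hdvd : ∀ i, d ∣ e i := by
    intro i
    rw [← Ideal.mem_span_singleton, ← hd]
    exact Ideal.subset_span ⟨i, rfl⟩
  -- d is coprime to card Z
  have hcop : IsCoprime d (Nat.card Z : ℤ) := by
    rw [Int.isCoprime_iff_gcd_eq_one]
    by_contra hg
    set m : ℕ := Int.gcd d (Nat.card Z) with hm
    have hcZ : Nat.card Z ≠ 0 := Nat.card_pos.ne'
    have hm0 : m ≠ 0 := by
      intro h0
      exact hcZ (by simpa using (Int.gcd_eq_zero_iff.mp h0).2)
    have hm2 : 2 ≤ m := by omega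
    set p := m.minFac with hp
    have hpp : p.Prime := Nat.minFac_prime (by omega)
    have hpm : p ∣ m := Nat.minFac_dvd m
    have hpZ : p ∣ Nat.card Z := hpm.trans (by
      have : ((m : ℤ)) ∣ ((Nat.card Z : ℤ)) := Int.gcd_dvd_right _ _
      exact_mod_cast this)
    have hpd : (p : ℤ) ∣ d := (Int.natCast_dvd_natCast.mpr hpm).trans (Int.gcd_dvd_left _ _)
    obtain ⟨i, hi⟩ := hc p hpp hpZ
    exact hi (hpd.trans (hdvd i))
  -- now surjectivity
  intro ζ
  obtain ⟨x, y, hxy⟩ := hcop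
  refine ⟨fun i => ζ ^ (x * c i), ?_⟩
  have h1 : ∏ i, (ζ ^ (x * c i)) ^ e i = ζ ^ (x * d) := by
    rw [Finset.prod_congr rfl fun i _ => (zpow_mul ζ (x * c i) (e i)).symm]
    rw [← zpow_fin_sum]
    rw [show (∑ i, x * c i * e i) = x * ∑ i, c i * e i by
      rw [Finset.mul_sum]; exact Finset.sum_congr rfl fun i _ => by ring]
    rw [show (∑ i, c i * e i) = d from by simpa [smul_eq_mul] using hcrep]
  have h2 : ζ ^ ((Nat.card Z : ℤ)) = 1 := by
    rw [zpow_natCast]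
    exact pow_card_eq_one'
  calc ∏ i, (ζ ^ (x * c i)) ^ e i = ζ ^ (x * d) := h1
    _ = ζ ^ (x * d) * (ζ ^ ((Nat.card Z : ℤ))) ^ y := by rw [h2]; simp
    _ = ζ ^ (x * d + (Nat.card Z : ℤ) * y) := by
        rw [zpow_add, zpow_mul ζ ((Nat.card Z : ℤ)) y]
    _ = ζ ^ (1 : ℤ) := by rw [show x * d + (Nat.card Z : ℤ) * y = 1 by linarith [hxy]]
    _ = ζ := zpow_one ζ

lemma center_nontrivial_of_nilpotent {G : Type*} [Group G] [Group.IsNilpotent G] [Nontrivial G] :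
    Nontrivial (Subgroup.center G) := by
  by_contra hc
  have hbot : Subgroup.center G = ⊥ := by
    rw [not_nontrivial_iff_subsingleton] at hc
    exact Subgroup.eq_bot_of_subsingleton _
  have hall : ∀ k : ℕ, Subgroup.upperCentralSeries G k = ⊥ := by
    intro k
    induction k with
    | zero => exact Subgroup.upperCentralSeries_zero G
    | succ k ih =>
      ext x
      simp only [Subgroup.mem_bot]
      constructor
      · intro hx
        rw [Subgroup.mem_upperCentralSeries_succ_iff] at hx
        have : x ∈ Subgroup.center G := by
          rw [Subgroup.mem_center_iff]
          intro y
          have := hx y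
          rw [ih, Subgroup.mem_bot] at this
          have : x * y * x⁻¹ = y := by
            have h' : x * y * x⁻¹ * y⁻¹ * y = 1 * y := by rw [← commutatorElement_def, this]
            simpa [mul_assoc] using h'
          calc y * x = x * y * x⁻¹ * x := by rw [this]
            _ = x * y := by group
        rw [hbot, Subgroup.mem_bot] at this
        exact this
      · intro hx
        rw [hx]
        exact one_mem _
  obtain ⟨k, hk⟩ := Group.IsNilpotent.nilpotent (G := G)
  rw [hall k] at hk
  obtain ⟨x, y, hxy⟩ := exists_pair_ne G
  apply hxy
  have hx : x ∈ (⊤ : Subgroup G) := mem_top x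
  have hy : y ∈ (⊤ : Subgroup G) := mem_top y
  rw [← hk, Subgroup.mem_bot] at hx hy
  rw [hx, hy]

lemma abelianization_nontrivial_of_nilpotent {G : Type*} [Group G] [Group.IsNilpotent G]
    [Nontrivial G] : Nontrivial (Abelianization G) := by
  have hcomm : commutator G ≠ ⊤ := by
    intro htop
    have hall : ∀ k : ℕ, Subgroup.lowerCentralSeries (⊤ : Subgroup G) k = ⊤ := by
      intro k
      induction k with
      | zero => exact Subgroup.lowerCentralSeries_zero (G := G) (S := ⊤)
      | succ k ih =>
        rw [Subgroup.lowerCentralSeries_succ, ih]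
        exact htop
    obtain ⟨k, hk⟩ := Subgroup.nilpotent_iff_lowerCentralSeries.mp (inferInstance : Group.IsNilpotent G)
    rw [hall k] at hk
    obtain ⟨x, y, hxy⟩ := exists_pair_ne G
    apply hxy
    have hx : x ∈ (⊤ : Subgroup G) := mem_top x
    have hy : y ∈ (⊤ : Subgroup G) := mem_top y
    rw [hk, Subgroup.mem_bot] at hx hy
    rw [hx, hy]
  obtain ⟨g, hg⟩ : ∃ g, g ∉ commutator G := by
    by_contra hcon
    push_neg at hcon
    exact hcomm ((Subgroup.eq_top_iff' _).mpr hcon)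
  refine ⟨Abelianization.of g, 1, fun h => hg ?_⟩
  exact (QuotientGroup.eq_one_iff g).mp h

/-- In a finite nilpotent group, every prime dividing the order admits a surjective hom
onto a finite commutative group of order divisible by p. -/
lemma exists_comm_quotient {N : Type u} [Group N] [Finite N] [Group.IsNilpotent N]
    {p : ℕ} (hp : p.Prime) (hdvd : p ∣ Nat.card N) :
    ∃ (A : Type u) (_ : CommGroup A) (_ : Finite A) (a : N →* A),
      Function.Surjective a ∧ p ∣ Nat.card A := by
  haveI : Fact p.Prime := ⟨hp⟩
  have h04 := (isNilpotent_of_finite_tfae (G := N)).out 0 4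
  obtain ⟨e⟩ := h04.mp ‹Group.IsNilpotent N›
  have hmem : p ∈ (Nat.card N).primeFactors :=
    Nat.mem_primeFactors.mpr ⟨hp, hdvd, Nat.card_pos.ne'⟩
  set q : (Nat.card N).primeFactors := ⟨p, hmem⟩ with hq
  obtain ⟨P⟩ : Nonempty (Sylow p N) := inferInstance
  let P' : Sylow (↑q : ℕ) N := P
  let proj1 : N →* (∀ P'' : Sylow (↑q : ℕ) N, (↑P'' : Subgroup N)) :=
    (Pi.evalMonoidHom
      (fun q' : (Nat.card N).primeFactors => ∀ P'' : Sylow (↑q' : ℕ) N, (↑P'' : Subgroup N)) q).comp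
      e.symm.toMonoidHom
  let proj : N →* (P : Subgroup N) :=
    (Pi.evalMonoidHom (fun P'' : Sylow (↑q : ℕ) N => ((P'' : Subgroup N) : Type u)) P').comp proj1
  have hprojsurj : Function.Surjective proj :=
    (Function.surjective_eval _).comp ((Function.surjective_eval _).comp e.symm.surjective)
  have hcardP : Nat.card (P : Subgroup N) = p ^ (Nat.card N).factorization p :=
    Sylow.card_eq_multiplicity P
  have hk : (Nat.card N).factorization p ≠ 0 :=
    (Nat.Prime.factorization_pos_of_dvd hp Nat.card_pos.ne' hdvd).ne'
  haveI : Nontrivial (P : Subgroup N) := by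
    apply Finite.one_lt_card_iff_nontrivial.mp
    rw [hcardP]
    exact Nat.one_lt_pow hk hp.one_lt
  haveI : Group.IsNilpotent (P : Subgroup N) := P.isPGroup'.isNilpotent
  haveI : Nontrivial (Abelianization (P : Subgroup N)) :=
    abelianization_nontrivial_of_nilpotent
  refine ⟨Abelianization (P : Subgroup N), inferInstance, inferInstance,
    (Abelianization.of).comp proj, ?_, ?_⟩
  · exact QuotientGroup.mk_surjective.comp hprojsurj
  · have hdvd2 : Nat.card (Abelianization (P : Subgroup N)) ∣ p ^ (Nat.card N).factorization p := by
      rw [← hcardP]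
      exact Subgroup.card_quotient_dvd_card _
    obtain ⟨j, hj, hcard⟩ := (Nat.dvd_prime_pow hp).mp hdvd2
    have hlt : 1 < Nat.card (Abelianization (P : Subgroup N)) :=
      Finite.one_lt_card_iff_nontrivial.mpr inferInstance
    have hj0 : j ≠ 0 := by
      rintro rfl; rw [pow_zero] at hcard; omega
    rw [hcard]
    exact dvd_pow_self p hj0

lemma not_surj_of_prime_dvd {N : Type u} [Group N] [Finite N] [Group.IsNilpotent N] {n : ℕ}
    (w : Monoid.Coprod N (FreeGroup (Fin n))) {p : ℕ} (hp : p.Prime)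
    (hdvd : p ∣ Nat.card N) (he : ∀ i, (p : ℤ) ∣ paramExpSum w i) :
    ¬ Function.Surjective (paramWordMap w) := by
  intro hs
  obtain ⟨A, _, _, a, hasurj, hpA⟩ := exists_comm_quotient hp hdvd
  set w' := Monoid.Coprod.map a (MonoidHom.id _) w with hw'
  have hs' : Function.Surjective (paramWordMap w') := by
    intro x
    obtain ⟨y, hy⟩ := hasurj x
    obtain ⟨v, hv⟩ := hs y
    exact ⟨fun i => a (v i), by rw [paramWordMap_map, hv, hy]⟩
  -- the p-th power map on A is surjective
  have hpow : Function.Surjective (fun x : A => x ^ p) := by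
    intro x
    obtain ⟨u, hu⟩ := hs' (paramWordMap w' 1 * x)
    rw [paramWordMap_comm_eq] at hu
    have hx : ∏ i, u i ^ paramExpSum w' i = x := by
      exact mul_left_cancel hu
    refine ⟨∏ i, u i ^ ((paramExpSum w i) / p), ?_⟩
    have : ∀ i, paramExpSum w' i = ((paramExpSum w i) / p) * p := by
      intro i
      rw [paramExpSum_map]
      exact (Int.ediv_mul_cancel (he i)).symm
    rw [← hx, Finset.prod_congr rfl fun i _ => congrArg (u i ^ ·) (this i)]
    simp only [zpow_mul, zpow_natCast]
    rw [← Finset.prod_pow]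
  have hinj : Function.Injective (fun x : A => x ^ p) :=
    Finite.injective_iff_surjective.mpr hpow
  haveI : Fact p.Prime := ⟨hp⟩
  obtain ⟨x, hx⟩ := exists_prime_orderOf_dvd_card' p hpA
  have hx1 : x ≠ 1 := by
    intro h; rw [h, orderOf_one] at hx; exact hp.one_lt.ne' hx.symm
  apply hx1
  apply hinj
  show x ^ p = (1 : A) ^ p
  rw [one_pow, ← hx, pow_orderOf_eq_one]

noncomputable def equivFinOfNatCard {X : Type*} [Finite X] (K : ℕ) (h : Nat.card X = K) :
    X ≃ Fin K := by
  have : Fintype X := Fintype.ofFinite X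
  exact Fintype.equivFinOfCardEq (by rw [← Nat.card_eq_fintype_card, h])

theorem main_aux (c : ℕ) : ∀ (N : Type u) [Group N] [Finite N] [Group.IsNilpotent N],
    Nat.card N = c → ∀ (n : ℕ) (w : Monoid.Coprod N (FreeGroup (Fin n))),
    Function.Surjective (paramWordMap w) → ∀ g : N,
    Nat.card {v : Fin n → N // paramWordMap w v = g} = Nat.card N ^ (n - 1) := by
  induction c using Nat.strong_induction_on with
  | _ c ih =>
  intro N _ _ _ hcard n w hs g
  rcases subsingleton_or_nontrivial N with hN | hN
  · have h1 : Nat.card N = 1 := Nat.card_eq_one_iff_unique.mpr ⟨⟨Subsingleton.elim⟩, ⟨1⟩⟩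
    have e : {v : Fin n → N // paramWordMap w v = g} ≃ (Fin n → N) :=
      Equiv.subtypeUnivEquiv (fun v => Subsingleton.elim _ _)
    rw [Nat.card_congr e, Nat.card_fun, h1]
    simp
  · haveI : Nontrivial (Subgroup.center N) := center_nontrivial_of_nilpotent
    set Z := Subgroup.center N with hZ
    set ex : Fin n → ℤ := fun i => paramExpSum w i with hex
    let φ : (Fin n → Z) →* Z := {
      toFun := fun z => ∏ i, z i ^ ex i
      map_one' := by simp
      map_mul' := by
        intro z1 z2
        simp only [Pi.mul_apply, mul_zpow]
        rw [Finset.prod_mul_distrib] }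
    by_cases hφ : Function.Surjective φ
    · -- Case A
      have hn1 : n ≠ 0 := by
        rintro rfl
        obtain ⟨t, ht⟩ := exists_ne (1 : Z)
        obtain ⟨z, hz⟩ := hφ t
        apply ht
        rw [← hz]
        show ∏ i : Fin 0, z i ^ ex i = 1
        simp
      set Q := N ⧸ Z with hQ
      let π : N →* Q := QuotientGroup.mk' Z
      have hπs : Function.Surjective π := QuotientGroup.mk'_surjective Z
      set w' := Monoid.Coprod.map π (MonoidHom.id _) w with hw'
      have hs' : Function.Surjective (paramWordMap w') := by
        intro x
        obtain ⟨y, hy⟩ := hπs x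
        obtain ⟨v, hv⟩ := hs y
        exact ⟨fun i => π (v i), by rw [paramWordMap_map, hv, hy]⟩
      have hcZ : 1 < Nat.card Z := Finite.one_lt_card
      have hsplit : Nat.card N = Nat.card Q * Nat.card Z :=
        Subgroup.card_eq_card_quotient_mul_card_subgroup Z
      have hlt : Nat.card Q < c := by
        rw [← hcard, hsplit]
        have h0 : 0 < Nat.card Q := Nat.card_pos
        nlinarith
      have hIH := ih (Nat.card Q) hlt Q rfl n w' hs'
      -- the fiber map
      let Fib := {u : Fin n → Q // paramWordMap w' u = π g}
      let f : {v : Fin n → N // paramWordMap w v = g} → Fib := fun v =>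
        ⟨fun i => π (v.1 i), by rw [paramWordMap_map, v.2]⟩
      -- each fiber of f has cardinality |Z|^(n-1)
      have hfib : ∀ u : Fib, Nat.card {a // f a = u} = Nat.card Z ^ (n - 1) := by
        intro u
        -- choose a lift of u
        have hlift : ∀ i, ∃ x : N, π x = u.1 i := fun i => hπs (u.1 i)
        choose v₀ hv₀ using hlift
        have hπv₀ : π (paramWordMap w v₀) = π g := by
          rw [← paramWordMap_map π w v₀]
          rw [show (fun i => π (v₀ i)) = u.1 from funext hv₀]
          exact u.2
        have hmem : (paramWordMap w v₀)⁻¹ * g ∈ Z := by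
          have h1 : π ((paramWordMap w v₀)⁻¹ * g) = 1 := by
            rw [map_mul, map_inv, hπv₀]
            simp
          rwa [← QuotientGroup.ker_mk' Z, MonoidHom.mem_ker]
        let t : Z := ⟨(paramWordMap w v₀)⁻¹ * g, hmem⟩
        have hmem1 : ∀ (a : {a // f a = u}) (i : Fin n), (v₀ i)⁻¹ * a.1.1 i ∈ Z := by
          intro a i
          have h2 : π (a.1.1 i) = u.1 i := congrArg (fun b => b.1 i) a.2
          rw [← QuotientGroup.ker_mk' Z, MonoidHom.mem_ker, map_mul, map_inv, h2, hv₀]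
          simp
        have key : ∀ (a : {a // f a = u}),
            paramWordMap w a.1.1 =
              paramWordMap w v₀ *
                ↑(∏ i, (⟨(v₀ i)⁻¹ * a.1.1 i, hmem1 a i⟩ : Z) ^ paramExpSum w i) := by
          intro a
          have hv : a.1.1 = fun i => v₀ i * ((⟨(v₀ i)⁻¹ * a.1.1 i, hmem1 a i⟩ : Z) : N) := by
            funext i
            simp
          conv_lhs => rw [hv]
          exact paramWordMap_central_shift w v₀ _
        have hE : {a // f a = u} ≃ {z : Fin n → Z // φ z = t} := by
          refine ⟨fun a => ⟨fun i => ⟨(v₀ i)⁻¹ * a.1.1 i, hmem1 a i⟩, ?_⟩,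
            fun z => ⟨⟨fun i => v₀ i * (z.1 i : N), ?_⟩, ?_⟩, ?_, ?_⟩
          · -- φ z = t
            apply Subtype.ext
            show ((∏ i, (⟨(v₀ i)⁻¹ * a.1.1 i, hmem1 a i⟩ : Z) ^ ex i : Z) : N)
              = (paramWordMap w v₀)⁻¹ * g
            rw [eq_inv_mul_iff_mul_eq]
            rw [← key a]
            exact a.1.2
          · -- word value is g
            show paramWordMap w (fun i => v₀ i * (z.1 i : N)) = g
            rw [paramWordMap_central_shift w v₀ z.1]
            have hz2 : (∏ i, z.1 i ^ paramExpSum w i) = t := z.2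
            rw [hz2]
            show paramWordMap w v₀ * ((paramWordMap w v₀)⁻¹ * g) = g
            simp
          · -- f value is u
            apply Subtype.ext
            funext i
            show π (v₀ i * (z.1 i : N)) = u.1 i
            have hπz : π (z.1 i : N) = 1 := by
              rw [← MonoidHom.mem_ker, QuotientGroup.ker_mk' Z]
              exact (z.1 i).2
            rw [map_mul, hπz, mul_one, hv₀]
          · intro a
            apply Subtype.ext
            apply Subtype.ext
            funext i
            simp
          · intro z
            apply Subtype.ext
            funext i
            apply Subtype.ext
            simp
        rw [Nat.card_congr hE]
        have hm := card_fiber_mul φ hφ t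
        have hfun : Nat.card (Fin n → Z) = Nat.card Z ^ n := by
          rw [Nat.card_fun, Nat.card_eq_fintype_card (α := Fin n), Fintype.card_fin]
        rw [hfun] at hm
        have hpow : Nat.card Z ^ n = Nat.card Z ^ (n - 1) * Nat.card Z := by
          conv_lhs => rw [show n = (n - 1) + 1 from (Nat.succ_pred_eq_of_pos (Nat.pos_of_ne_zero hn1)).symm]
          rw [pow_succ]
        rw [hpow] at hm
        exact Nat.eq_of_mul_eq_mul_right (by omega) hm
      -- assemble
      have hcardeq : Nat.card {v : Fin n → N // paramWordMap w v = g}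
          = Nat.card Fib * Nat.card Z ^ (n - 1) := by
        rw [← Nat.card_congr (Equiv.sigmaFiberEquiv f)]
        rw [Nat.card_congr ((Equiv.sigmaCongrRight fun u =>
          equivFinOfNatCard _ (hfib u)).trans (Equiv.sigmaEquivProd Fib (Fin (Nat.card Z ^ (n - 1)))))]
        rw [Nat.card_prod, Nat.card_eq_fintype_card (α := Fin _), Fintype.card_fin]
      have hFib : Nat.card Fib = Nat.card Q ^ (n - 1) := hIH (π g)
      rw [hcardeq, hFib, hsplit, mul_pow]
    · -- Case B
      obtain ⟨p, hp, hpZ, hpe⟩ := exists_prime_of_not_surj ex (by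
        intro hsurj
        apply hφ
        exact hsurj)
      exact absurd hs (not_surj_of_prime_dvd w hp
        (hpZ.trans (Subgroup.card_subgroup_dvd_card Z)) hpe)

/-- For a finite nilpotent group `N`, a word-with-parameters
map `w : Nⁿ → N` is surjective iff all of its fibers have size `|N|^(n-1)`. -/
theorem stmt_6 (N : Type*) [Group N] [Finite N] [Group.IsNilpotent N]
    (n : ℕ) (w : Monoid.Coprod N (FreeGroup (Fin n))) :
    Function.Surjective (paramWordMap w) ↔
      ∀ g : N, Nat.card {v : Fin n → N // paramWordMap w v = g} =
        Nat.card N ^ (n - 1) := by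
  constructor
  · intro hs g
    exact main_aux (Nat.card N) N rfl n w hs g
  · intro h g
    have hpos : 0 < Nat.card {v : Fin n → N // paramWordMap w v = g} := by
      rw [h g]
      exact pow_pos Nat.card_pos _
    obtain ⟨⟨v, hv⟩⟩ := (Nat.card_pos_iff.mp hpos).1
    exact ⟨v, hv⟩
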